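/- For every seller j ∈ A and every cutoff vector (v_s*)_{s∈A} ∈ [0,r]^A, the simple-speculation acquisition price exceeds the enhanced-speculation acquisition price by p_j*(𝐯*) − p̄_j*(𝐯*) = ∫₀^{v_j*} { 1 − ∏_{s ∈ A∖{j}} (1 − F_s(min(x, v_s*))) } dx. In particular, if v_j* > 0 and v_s* > 0 for some s ∈ A∖{j}, then p_j*(𝐯*) > p̄_j*(𝐯*). -/

import Mathlib

open MeasureTheory Set

variable {N : ℕ}

/-- Simple-speculation acquisition price for seller `j`, given cutoff vector `vstar`. -/
noncomputable def pSimple (F : Fin N → ℝ → ℝ) (r : ℝ) (A : Finset (Fin N))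
    (vstar : Fin N → ℝ) (j : Fin N) : ℝ :=
  vstar j + ∫ x in (vstar j)..r,
    (∏ i ∈ Finset.univ \ A, (1 - F i x)) *
      ∏ s ∈ A.erase j, (1 - F s (max x (vstar s)))

/-- Enhanced-speculation acquisition price for seller `j` (the speculator later resells
surplus items back to accepting sellers via a VCG auction). -/
noncomputable def pEnhanced (F : Fin N → ℝ → ℝ) (r : ℝ) (A : Finset (Fin N))
    (vstar : Fin N → ℝ) (j : Fin N) : ℝ :=
  (∫ x in (0 : ℝ)..(vstar j), ∏ s ∈ A.erase j, (1 - F s (min x (vstar s)))) +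
    ∫ x in (vstar j)..r,
      (∏ i ∈ Finset.univ \ A, (1 - F i x)) *
        ∏ s ∈ A.erase j, (1 - F s (max x (vstar s)))

/-- The simple-speculation price exceeds the enhanced-speculation price by the expected
value of the option to win one's item back, and strictly so when the relevant cutoffs
are positive. -/
theorem pSimple_sub_pEnhanced
    (N : ℕ) (hN : 2 ≤ N) (F : Fin N → ℝ → ℝ)
    (hFcont : ∀ i, Continuous (F i)) (hFmono : ∀ i, Monotone (F i))
    (hF0 : ∀ i, F i 0 = 0) (hFpos : ∀ i, ∀ v ∈ Ioc (0 : ℝ) 1, 0 < F i v)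
    (hF1 : ∀ i, F i 1 = 1)
    (r : ℝ) (hr : r ∈ Ioc (0 : ℝ) 1)
    (A : Finset (Fin N)) (hA : 2 ≤ A.card)
    (vstar : Fin N → ℝ) (hvstar : ∀ s ∈ A, vstar s ∈ Icc (0 : ℝ) r) :
    ∀ j ∈ A,
      (pSimple F r A vstar j - pEnhanced F r A vstar j =
        ∫ x in (0 : ℝ)..(vstar j),
          (1 - ∏ s ∈ A.erase j, (1 - F s (min x (vstar s))))) ∧
      (0 < vstar j → (∃ s ∈ A.erase j, 0 < vstar s) →
        pEnhanced F r A vstar j < pSimple F r A vstar j) := by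
  intro j hj
  have hvj := hvstar j hj
  have hr1 : r ≤ 1 := hr.2
  set g : ℝ → ℝ := fun x => ∏ s ∈ A.erase j, (1 - F s (min x (vstar s))) with hg
  have hgcont : Continuous g := by
    apply continuous_finset_prod
    intro s _
    exact continuous_const.sub ((hFcont s).comp (continuous_id.min continuous_const))
  have key : pSimple F r A vstar j - pEnhanced F r A vstar j
      = vstar j - ∫ x in (0:ℝ)..(vstar j), g x := by
    unfold pSimple pEnhanced
    ring
  have hInt : (∫ x in (0:ℝ)..(vstar j), (1 - g x))
      = vstar j - ∫ x in (0:ℝ)..(vstar j), g x := by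
    rw [intervalIntegral.integral_sub intervalIntegrable_const (hgcont.intervalIntegrable _ _)]
    simp
  have hEq : pSimple F r A vstar j - pEnhanced F r A vstar j
      = ∫ x in (0:ℝ)..(vstar j), (1 - g x) := by rw [key, hInt]
  refine ⟨hEq, ?_⟩
  rintro hvjpos ⟨s₀, hs₀, hs₀pos⟩
  have hpos : 0 < ∫ x in (0:ℝ)..(vstar j), (1 - g x) := by
    apply intervalIntegral.intervalIntegral_pos_of_pos_on
      ((continuous_const.sub hgcont).intervalIntegrable _ _) _ hvjpos
    intro x hx
    have hx0 : 0 < x := hx.1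
    have hx1 : x ≤ 1 := le_trans (le_of_lt hx.2) (le_trans hvj.2 hr1)
    have hbound : ∀ s ∈ A.erase j, 0 ≤ 1 - F s (min x (vstar s)) ∧
        1 - F s (min x (vstar s)) ≤ 1 := by
      intro s hs
      have hvs := hvstar s (Finset.mem_of_mem_erase hs)
      have hm0 : (0:ℝ) ≤ min x (vstar s) := le_min hx0.le hvs.1
      have hm1 : min x (vstar s) ≤ 1 := le_trans (min_le_left _ _) hx1
      have h0 : 0 ≤ F s (min x (vstar s)) := by
        have := hFmono s hm0
        rwa [hF0 s] at this
      have h1 : F s (min x (vstar s)) ≤ 1 := by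
        have := hFmono s hm1
        rwa [hF1 s] at this
      constructor <;> linarith
    have hglt : g x < 1 := by
      have hmem : min x (vstar s₀) ∈ Ioc (0:ℝ) 1 := by
        have hvs := hvstar s₀ (Finset.mem_of_mem_erase hs₀)
        exact ⟨lt_min hx0 hs₀pos, le_trans (min_le_left _ _) hx1⟩
      have hFp : 0 < F s₀ (min x (vstar s₀)) := hFpos s₀ _ hmem
      have hfact : 1 - F s₀ (min x (vstar s₀)) < 1 := by linarith
      have hfactnn : 0 ≤ 1 - F s₀ (min x (vstar s₀)) := (hbound s₀ hs₀).1
      have hP1 : (∏ s ∈ (A.erase j).erase s₀, (1 - F s (min x (vstar s)))) ≤ 1 :=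
        Finset.prod_le_one (fun s hs => (hbound s (Finset.mem_of_mem_erase hs)).1)
          (fun s hs => (hbound s (Finset.mem_of_mem_erase hs)).2)
      calc g x = (1 - F s₀ (min x (vstar s₀))) *
            ∏ s ∈ (A.erase j).erase s₀, (1 - F s (min x (vstar s))) :=
            (Finset.mul_prod_erase _ _ hs₀).symm
        _ ≤ 1 - F s₀ (min x (vstar s₀)) := mul_le_of_le_one_right hfactnn hP1
        _ < 1 := hfact
    show 0 < 1 - g x
    linarith
  linarith [hEq, hpos]
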